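/- Assume 2 ≤ m ≤ N−2. Let 0 denote the element with e_s = 0 for all s and e(X) = 0 for all X with X:m and n(X) > 2. Then F(0) has all components e′_s = 0, e′(X) = −ε/2 for X = {m, m+1} and for X = {0, 1}, and e′(X) = 0 for every other X; consequently ‖F(0)‖ = 4|ε|. -/
import Mathlib


open Finset
open scoped symmDiff

/-- `M = {1,…,m}` viewed inside `ℤ/Nℤ`. -/
def Mset (N m : ℕ) : Finset (ZMod N) := (Finset.Icc 1 m).image (fun i : ℕ => (i : ZMod N))

/-- `∂Y`: the set of `j ∈ ℤ/Nℤ` such that exactly one of `j`, `j+1` lies in `Y`. -/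
def pbdry (N : ℕ) [NeZero N] (Y : Finset (ZMod N)) : Finset (ZMod N) :=
  Finset.univ.filter fun j => (j ∈ Y ∧ j + 1 ∉ Y) ∨ (j ∉ Y ∧ j + 1 ∈ Y)

/-- `n(X) = |∂(X Δ M)|`. -/
def nX (N m : ℕ) [NeZero N] (X : Finset (ZMod N)) : ℕ := (pbdry N (X ∆ Mset N m)).card

/-- The translate `Y + s = {i + s : i ∈ Y}`. -/
def tr (N : ℕ) (Y : Finset (ZMod N)) (s : ZMod N) : Finset (ZMod N) := Y.image (· + s)

/-- Extend a family of coefficients by setting `e(∅) := 1` and `e(M Δ (M+s)) := 0`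
for `s ≠ 0`. -/
def pext (N m : ℕ) [NeZero N] (e : Finset (ZMod N) → ℝ) : Finset (ZMod N) → ℝ :=
  fun X =>
    if X = ∅ then 1
    else if ∃ s : ZMod N, X = Mset N m ∆ tr N (Mset N m) s then 0
    else e X

/-- The sets `X` with `X:m` (i.e. `|X Δ M| = m`) and `n(X) > 2`. -/
def psector (N m : ℕ) [NeZero N] : Finset (Finset (ZMod N)) :=
  Finset.univ.filter fun X => (X ∆ Mset N m).card = m ∧ 2 < nX N m X

/-- The droplet fixed-point map `F(e_s, e(X)) = (e′_s, e′(X))`, where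
`e′_s = 2ε·Σ_{j ∈ ∂(M−s)} e(M Δ (M−s) Δ {j,j+1})` and, for `X` with `X:m` and `n(X) > 2`,
`e′(X) = −(ε/(n(X)−2))·Σ_{j ∈ ∂(X Δ M)} e(X Δ {j,j+1})
  + (1/(2(n(X)−2)))·Σ_{s} e_s·e((X+s) Δ (M+s) Δ M)`
(with the conventions `e(∅) = 1`, `e(M Δ (M+s)) = 0` for `s ≠ 0`);
all other components are set to `0`. -/
noncomputable def dropF (N m : ℕ) [NeZero N] (ε : ℝ)
    (p : (ZMod N → ℝ) × (Finset (ZMod N) → ℝ)) :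
    (ZMod N → ℝ) × (Finset (ZMod N) → ℝ) :=
  (fun s => 2 * ε * ∑ j ∈ pbdry N (tr N (Mset N m) (-s)),
      pext N m p.2 (Mset N m ∆ tr N (Mset N m) (-s) ∆ {j, j + 1}),
    fun X =>
      if (X ∆ Mset N m).card = m ∧ 2 < nX N m X then
        -(ε / ((nX N m X : ℝ) - 2)) *
            ∑ j ∈ pbdry N (X ∆ Mset N m), pext N m p.2 (X ∆ {j, j + 1})
          + (1 / (2 * ((nX N m X : ℝ) - 2))) *
              ∑ s : ZMod N, p.1 s * pext N m p.2 (tr N X s ∆ tr N (Mset N m) s ∆ Mset N m)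
      else 0)

/-- The norm `‖e‖ = Σ_s |e_s| + 2·Σ_{X:m, n(X)>2} (n(X)−2)·|e(X)|`. -/
def pnorm (N m : ℕ) [NeZero N] (p : (ZMod N → ℝ) × (Finset (ZMod N) → ℝ)) : ℝ :=
  ∑ s : ZMod N, |p.1 s|
    + 2 * ∑ X ∈ psector N m, ((nX N m X : ℝ) - 2) * |p.2 X|

section Aux
variable {N m : ℕ} [NeZero N]

lemma cast_val (a : ZMod N) : ((a.val : ℕ) : ZMod N) = a := by
  rw [ZMod.natCast_val, ZMod.cast_id]

lemma eq_cast_iff {i : ℕ} (hi : i < N) (a : ZMod N) : a = (i : ZMod N) ↔ a.val = i := by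
  constructor
  · rintro rfl; exact ZMod.val_cast_of_lt hi
  · intro h; rw [← h, cast_val]

lemma val_add_one (hN : 4 ≤ N) (a : ZMod N) :
    (a + 1).val = if a.val + 1 = N then 0 else a.val + 1 := by
  have h := ZMod.val_add a 1
  have h1 : (1 : ZMod N).val = 1 := by rw [ZMod.val_one_eq_one_mod]; exact Nat.mod_eq_of_lt (by omega)
  rw [h1] at h
  rw [h]
  split_ifs with hc
  · rw [hc, Nat.mod_self]
  · have := ZMod.val_lt a
    exact Nat.mod_eq_of_lt (by omega)

lemma val_sub_one (hN : 4 ≤ N) (a : ZMod N) :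
    (a - 1).val = if a.val = 0 then N - 1 else a.val - 1 := by
  have h := val_add_one hN (a - 1)
  rw [sub_add_cancel] at h
  have h1 := ZMod.val_lt (a - 1)
  have h2 := ZMod.val_lt a
  split_ifs with h0 <;> split_ifs at h <;> omega

lemma mem_Mset (hmN : m < N) (a : ZMod N) :
    a ∈ Mset N m ↔ 1 ≤ a.val ∧ a.val ≤ m := by
  simp only [Mset, mem_image, mem_Icc]
  constructor
  · rintro ⟨i, ⟨hi1, hi2⟩, rfl⟩
    rw [ZMod.val_cast_of_lt (lt_of_le_of_lt hi2 hmN)]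
    exact ⟨hi1, hi2⟩
  · rintro ⟨h1, h2⟩
    exact ⟨a.val, ⟨h1, h2⟩, cast_val a⟩

lemma card_Mset (hmN : m < N) : (Mset N m).card = m := by
  rw [Mset, Finset.card_image_of_injOn, Nat.card_Icc]
  · omega
  · intro i hi j hj hij
    simp only [Finset.coe_Icc, Set.mem_Icc] at hi hj
    have := congrArg ZMod.val hij
    rwa [ZMod.val_cast_of_lt (by omega), ZMod.val_cast_of_lt (by omega)] at this

lemma mem_tr (Y : Finset (ZMod N)) (s a : ZMod N) : a ∈ tr N Y s ↔ a - s ∈ Y := by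
  simp only [tr, mem_image]
  constructor
  · rintro ⟨y, hy, rfl⟩; simpa using hy
  · intro h; exact ⟨a - s, h, sub_add_cancel a s⟩

lemma mem_pbdry (Y : Finset (ZMod N)) (j : ZMod N) :
    j ∈ pbdry N Y ↔ ((j ∈ Y ∧ j + 1 ∉ Y) ∨ (j ∉ Y ∧ j + 1 ∈ Y)) := by
  simp [pbdry]

lemma pext_zero (X : Finset (ZMod N)) :
    pext N m 0 X = if X = ∅ then 1 else 0 := by
  unfold pext
  split_ifs <;> rfl

lemma self_ne_add_one (hN : 4 ≤ N) (j : ZMod N) : j ≠ j + 1 := by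
  intro h
  have h' := congrArg ZMod.val h
  rw [val_add_one hN] at h'
  have := ZMod.val_lt j
  split_ifs at h' <;> omega

lemma pair_succ_eq (hN : 4 ≤ N) (j c : ZMod N) :
    ({j, j + 1} : Finset (ZMod N)) = {c, c + 1} ↔ j = c := by
  constructor
  · intro h
    have hj : j ∈ ({c, c + 1} : Finset (ZMod N)) := h ▸ mem_insert_self _ _
    rw [mem_insert, mem_singleton] at hj
    rcases hj with hj | hj
    · exact hj
    · exfalso
      have hc : c ∈ ({j, j + 1} : Finset (ZMod N)) := by
        rw [h]; exact mem_insert_self _ _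
      rw [mem_insert, mem_singleton] at hc
      rcases hc with hc | hc
      · rw [hc] at hj
        exact self_ne_add_one hN j hj
      · rw [hc] at hj
        have h' := congrArg ZMod.val hj
        rw [val_add_one hN, val_add_one hN] at h'
        have := ZMod.val_lt j
        split_ifs at h' <;> omega
  · rintro rfl; rfl

lemma interval_top (hN : 4 ≤ N) (hm2 : 2 ≤ m) (hmN : m + 2 ≤ N) {j : ZMod N}
    (h1 : j ∈ Mset N m) (h2 : j + 1 ∉ Mset N m) : j = (m : ZMod N) := by
  have hmN' : m < N := by omega
  rw [eq_cast_iff hmN']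
  rw [mem_Mset hmN'] at h1 h2
  rw [val_add_one hN] at h2
  split_ifs at h2 <;> omega

lemma interval_bot (hN : 4 ≤ N) (hm2 : 2 ≤ m) (hmN : m + 2 ≤ N) {j : ZMod N}
    (h1 : j ∉ Mset N m) (h2 : j + 1 ∈ Mset N m) : j = 0 := by
  have hmN' : m < N := by omega
  rw [← ZMod.val_eq_zero]
  rw [mem_Mset hmN'] at h1 h2
  rw [val_add_one hN] at h2
  split_ifs at h2 <;> omega

lemma no_gap (hN : 4 ≤ N) (hm2 : 2 ≤ m) (hmN : m + 2 ≤ N) (u : ZMod N)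
    (h1 : u - 1 ∈ Mset N m) (h2 : u + 1 ∈ Mset N m) : u ∈ Mset N m := by
  have hmN' : m < N := by omega
  rw [mem_Mset hmN'] at h1 h2 ⊢
  rw [val_sub_one hN] at h1
  rw [val_add_one hN] at h2
  have := ZMod.val_lt u
  split_ifs at h1 <;> split_ifs at h2 <;> omega

lemma exactly_one (hN : 4 ≤ N) (hm2 : 2 ≤ m) (hmN : m + 2 ≤ N) (j : ZMod N)
    (hcard : (Mset N m ∆ {j, j + 1}).card = m) :
    (j ∈ Mset N m ∧ j + 1 ∉ Mset N m) ∨ (j ∉ Mset N m ∧ j + 1 ∈ Mset N m) := by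
  have hmN' : m < N := by omega
  have hne : j ≠ j + 1 := self_ne_add_one hN j
  have hcM : (Mset N m).card = m := card_Mset hmN'
  have hcP : ({j, j + 1} : Finset (ZMod N)).card = 2 := by
    rw [card_insert_of_notMem (by simp [hne]), card_singleton]
  by_cases h1 : j ∈ Mset N m <;> by_cases h2 : j + 1 ∈ Mset N m
  · exfalso
    have hsub : ({j, j + 1} : Finset (ZMod N)) ⊆ Mset N m := by
      intro z hz
      rw [mem_insert, mem_singleton] at hz
      rcases hz with rfl | rfl <;> assumption
    have hEq : Mset N m ∆ ({j, j + 1} : Finset (ZMod N)) = Mset N m \ {j, j + 1} := by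
      rw [symmDiff_def, sup_eq_union, Finset.sdiff_eq_empty_iff_subset.mpr hsub, union_empty]
    rw [hEq, card_sdiff_of_subset hsub, hcM, hcP] at hcard
    omega
  · exact Or.inl ⟨h1, h2⟩
  · exact Or.inr ⟨h1, h2⟩
  · exfalso
    have hdisj : Disjoint (Mset N m) ({j, j + 1} : Finset (ZMod N)) := by
      rw [Finset.disjoint_left]
      intro a ha hP
      rw [mem_insert, mem_singleton] at hP
      rcases hP with rfl | rfl <;> contradiction
    have hEq : Mset N m ∆ ({j, j + 1} : Finset (ZMod N)) = Mset N m ∪ {j, j + 1} := by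
      rw [symmDiff_def, sup_eq_union, Finset.sdiff_eq_self_iff_disjoint.mpr hdisj,
        Finset.sdiff_eq_self_iff_disjoint.mpr hdisj.symm]
    rw [hEq, card_union_of_disjoint hdisj, hcM, hcP] at hcard
    omega

lemma card_symmDiff' (s t : Finset (ZMod N)) :
    (s ∆ t).card + 2 * (s ∩ t).card = s.card + t.card := by
  have h1 := Finset.card_sdiff_add_card_inter s t
  have h2 := Finset.card_sdiff_add_card_inter t s
  have h3 : (s ∆ t).card = (s \ t).card + (t \ s).card := by
    rw [symmDiff_def, sup_eq_union, card_union_of_disjoint disjoint_sdiff_sdiff]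
  rw [Finset.inter_comm t s] at h2
  omega

lemma mem_X1 (hm2 : 2 ≤ m) (hmN : m + 2 ≤ N) (z : ZMod N) :
    z ∈ ({(m : ZMod N), (m : ZMod N) + 1} : Finset (ZMod N)) ↔ z.val = m ∨ z.val = m + 1 := by
  have h : (m : ZMod N) + 1 = ((m + 1 : ℕ) : ZMod N) := by push_cast; ring
  rw [mem_insert, mem_singleton, h, eq_cast_iff (by omega), eq_cast_iff (by omega)]

lemma mem_X2 (hN : 4 ≤ N) (z : ZMod N) :
    z ∈ ({(0 : ZMod N), 1} : Finset (ZMod N)) ↔ z.val = 0 ∨ z.val = 1 := by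
  have h0 : (0 : ZMod N) = ((0 : ℕ) : ZMod N) := by norm_cast
  have h1 : (1 : ZMod N) = ((1 : ℕ) : ZMod N) := by norm_cast
  rw [mem_insert, mem_singleton, h0, h1, eq_cast_iff (by omega), eq_cast_iff (by omega)]

lemma no_pair_translate (hN : 4 ≤ N) (hm2 : 2 ≤ m) (hmN : m + 2 ≤ N) (t j : ZMod N) :
    Mset N m ∆ tr N (Mset N m) t ≠ {j, j + 1} := by
  intro h
  have hmN' : m < N := by omega
  have hT : tr N (Mset N m) t = Mset N m ∆ {j, j + 1} := by
    rw [← h]; exact (symmDiff_symmDiff_cancel_left _ _).symm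
  have hcT : (tr N (Mset N m) t).card = m := by
    rw [tr, Finset.card_image_of_injective _ (add_left_injective t), card_Mset hmN']
  have hcard : (Mset N m ∆ ({j, j + 1} : Finset (ZMod N))).card = m := by
    rw [← hT]; exact hcT
  have key : ∀ z : ZMod N, z ∈ Mset N m ∆ ({j, j + 1} : Finset (ZMod N)) ↔ z - t ∈ Mset N m := by
    intro z; rw [← hT, mem_tr]
  rcases exactly_one hN hm2 hmN j hcard with ⟨h1, h2⟩ | ⟨h1, h2⟩
  · have hj : j = (m : ZMod N) := interval_top hN hm2 hmN h1 h2
    subst hj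
    have hA : ((m - 1 : ℕ) : ZMod N) - t ∈ Mset N m := by
      rw [← key, mem_symmDiff]
      left
      constructor
      · rw [mem_Mset hmN', ZMod.val_cast_of_lt (by omega)]; omega
      · rw [mem_X1 hm2 hmN, ZMod.val_cast_of_lt (by omega)]; omega
    have hC : ((m + 1 : ℕ) : ZMod N) - t ∈ Mset N m := by
      rw [← key, mem_symmDiff]
      right
      constructor
      · rw [mem_X1 hm2 hmN, ZMod.val_cast_of_lt (by omega)]; omega
      · rw [mem_Mset hmN', ZMod.val_cast_of_lt (by omega)]; omega
    have hB : ((m : ℕ) : ZMod N) - t ∉ Mset N m := by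
      rw [← key, mem_symmDiff]
      rintro (⟨-, hP⟩ | ⟨-, hM⟩)
      · exact hP (mem_insert_self _ _)
      · exact hM (by rw [mem_Mset hmN', ZMod.val_cast_of_lt hmN']; omega)
    apply hB
    have e1 : ((m - 1 : ℕ) : ZMod N) - t = (m : ZMod N) - t - 1 := by
      push_cast [Nat.cast_sub (by omega : 1 ≤ m)]; ring
    have e2 : ((m + 1 : ℕ) : ZMod N) - t = (m : ZMod N) - t + 1 := by
      push_cast; ring
    exact no_gap hN hm2 hmN _ (e1 ▸ hA) (e2 ▸ hC)
  · have hj : j = 0 := interval_bot hN hm2 hmN h1 h2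
    subst hj
    have hA : (0 : ZMod N) - t ∈ Mset N m := by
      rw [← key, mem_symmDiff]
      right
      constructor
      · exact mem_insert_self _ _
      · rw [mem_Mset hmN', ZMod.val_zero]; omega
    have hC : (2 : ZMod N) - t ∈ Mset N m := by
      rw [← key, mem_symmDiff]
      left
      have h2N : ((2 : ℕ) : ZMod N) = (2 : ZMod N) := by norm_cast
      constructor
      · rw [mem_Mset hmN', ← h2N, ZMod.val_cast_of_lt (by omega)]; omega
      · rw [zero_add, mem_X2 hN, ← h2N, ZMod.val_cast_of_lt (by omega)]; omega
    have hB : (1 : ZMod N) - t ∉ Mset N m := by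
      rw [← key, mem_symmDiff]
      have h1N : ((1 : ℕ) : ZMod N) = (1 : ZMod N) := by norm_cast
      rintro (⟨-, hP⟩ | ⟨-, hM⟩)
      · refine hP ?_
        rw [zero_add]
        exact mem_insert_of_mem (mem_singleton_self _)
      · exact hM (by rw [mem_Mset hmN', ← h1N, ZMod.val_cast_of_lt (by omega)]; omega)
    apply hB
    have e1 : (0 : ZMod N) - t = (1 : ZMod N) - t - 1 := by ring
    have e2 : (2 : ZMod N) - t = (1 : ZMod N) - t + 1 := by ring
    exact no_gap hN hm2 hmN _ (e1 ▸ hA) (e2 ▸ hC)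

end Aux
section Aux2
variable {N m : ℕ} [NeZero N]

lemma cast_ne {i j : ℕ} (hi : i < N) (hj : j < N) (hij : i ≠ j) :
    (i : ZMod N) ≠ (j : ZMod N) := by
  rw [Ne, eq_cast_iff hj, ZMod.val_cast_of_lt hi]
  exact hij

lemma mem_X1M (hN : 4 ≤ N) (hm2 : 2 ≤ m) (hmN : m + 2 ≤ N) (z : ZMod N) :
    z ∈ ({(m : ZMod N), (m : ZMod N) + 1} : Finset (ZMod N)) ∆ Mset N m ↔
      ((1 ≤ z.val ∧ z.val ≤ m - 1) ∨ z.val = m + 1) := by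
  have hmN' : m < N := by omega
  rw [Finset.mem_symmDiff, mem_X1 hm2 hmN, mem_Mset hmN']
  omega

lemma mem_X2M (hN : 4 ≤ N) (hm2 : 2 ≤ m) (hmN : m + 2 ≤ N) (z : ZMod N) :
    z ∈ ({(0 : ZMod N), 1} : Finset (ZMod N)) ∆ Mset N m ↔
      (z.val = 0 ∨ (2 ≤ z.val ∧ z.val ≤ m)) := by
  have hmN' : m < N := by omega
  rw [Finset.mem_symmDiff, mem_X2 hN, mem_Mset hmN']
  omega

lemma card_X1M (hN : 4 ≤ N) (hm2 : 2 ≤ m) (hmN : m + 2 ≤ N) :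
    (({(m : ZMod N), (m : ZMod N) + 1} : Finset (ZMod N)) ∆ Mset N m).card = m := by
  have hmN' : m < N := by omega
  have hint : ({(m : ZMod N), (m : ZMod N) + 1} : Finset (ZMod N)) ∩ Mset N m
      = {(m : ZMod N)} := by
    ext z
    rw [mem_inter, mem_X1 hm2 hmN, mem_Mset hmN', mem_singleton, eq_cast_iff hmN']
    omega
  have hc1 : ({(m : ZMod N), (m : ZMod N) + 1} : Finset (ZMod N)).card = 2 := by
    rw [card_insert_of_notMem (by rw [mem_singleton]; exact self_ne_add_one hN _),
      card_singleton]
  have h := card_symmDiff' ({(m : ZMod N), (m : ZMod N) + 1} : Finset (ZMod N)) (Mset N m)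
  rw [hint, card_singleton, hc1, card_Mset hmN'] at h
  omega

lemma card_X2M (hN : 4 ≤ N) (hm2 : 2 ≤ m) (hmN : m + 2 ≤ N) :
    (({(0 : ZMod N), 1} : Finset (ZMod N)) ∆ Mset N m).card = m := by
  have hmN' : m < N := by omega
  have h1N : (1 : ZMod N) = ((1 : ℕ) : ZMod N) := by norm_cast
  have hint : ({(0 : ZMod N), 1} : Finset (ZMod N)) ∩ Mset N m = {(1 : ZMod N)} := by
    ext z
    rw [mem_inter, mem_X2 hN, mem_Mset hmN', mem_singleton, h1N, eq_cast_iff (by omega)]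
    omega
  have hc1 : ({(0 : ZMod N), 1} : Finset (ZMod N)).card = 2 := by
    rw [card_insert_of_notMem, card_singleton]
    rw [mem_singleton, h1N]
    have h0N : (0 : ZMod N) = ((0 : ℕ) : ZMod N) := by norm_cast
    rw [h0N]
    exact cast_ne (by omega) (by omega) (by omega)
  have h := card_symmDiff' ({(0 : ZMod N), 1} : Finset (ZMod N)) (Mset N m)
  rw [hint, card_singleton, hc1, card_Mset hmN'] at h
  omega

lemma bdry_X1 (hN : 4 ≤ N) (hm2 : 2 ≤ m) (hmN : m + 2 ≤ N) :
    pbdry N (({(m : ZMod N), (m : ZMod N) + 1} : Finset (ZMod N)) ∆ Mset N m) =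
      {((0 : ℕ) : ZMod N), ((m - 1 : ℕ) : ZMod N), ((m : ℕ) : ZMod N), ((m + 1 : ℕ) : ZMod N)} := by
  ext k
  have hk := ZMod.val_lt k
  rw [mem_pbdry, mem_X1M hN hm2 hmN, mem_X1M hN hm2 hmN, val_add_one hN]
  simp only [mem_insert, mem_singleton, eq_cast_iff (show (0 : ℕ) < N by omega),
    eq_cast_iff (show m - 1 < N by omega), eq_cast_iff (show m < N by omega),
    eq_cast_iff (show m + 1 < N by omega)]
  split_ifs <;> (try simp only [or_false, false_or, and_true, true_and, true_or, or_true, not_true, and_false, false_and, not_false_eq_true]) <;> omega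

lemma bdry_X2 (hN : 4 ≤ N) (hm2 : 2 ≤ m) (hmN : m + 2 ≤ N) :
    pbdry N (({(0 : ZMod N), 1} : Finset (ZMod N)) ∆ Mset N m) =
      {((N - 1 : ℕ) : ZMod N), ((0 : ℕ) : ZMod N), ((1 : ℕ) : ZMod N), ((m : ℕ) : ZMod N)} := by
  ext k
  have hk := ZMod.val_lt k
  rw [mem_pbdry, mem_X2M hN hm2 hmN, mem_X2M hN hm2 hmN, val_add_one hN]
  simp only [mem_insert, mem_singleton, eq_cast_iff (show N - 1 < N by omega),
    eq_cast_iff (show (0 : ℕ) < N by omega), eq_cast_iff (show (1 : ℕ) < N by omega),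
    eq_cast_iff (show m < N by omega)]
  split_ifs <;> (try simp only [or_false, false_or, and_true, true_and, true_or, or_true, not_true, and_false, false_and, not_false_eq_true]) <;> omega

lemma nX1_eq (hN : 4 ≤ N) (hm2 : 2 ≤ m) (hmN : m + 2 ≤ N) :
    nX N m ({(m : ZMod N), (m : ZMod N) + 1} : Finset (ZMod N)) = 4 := by
  rw [nX, bdry_X1 hN hm2 hmN]
  have d1 : ((0 : ℕ) : ZMod N) ∉
      ({((m - 1 : ℕ) : ZMod N), ((m : ℕ) : ZMod N), ((m + 1 : ℕ) : ZMod N)} : Finset (ZMod N)) := by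
    simp only [mem_insert, mem_singleton, not_or]
    exact ⟨cast_ne (by omega) (by omega) (by omega), cast_ne (by omega) (by omega) (by omega),
      cast_ne (by omega) (by omega) (by omega)⟩
  have d2 : ((m - 1 : ℕ) : ZMod N) ∉
      ({((m : ℕ) : ZMod N), ((m + 1 : ℕ) : ZMod N)} : Finset (ZMod N)) := by
    simp only [mem_insert, mem_singleton, not_or]
    exact ⟨cast_ne (by omega) (by omega) (by omega), cast_ne (by omega) (by omega) (by omega)⟩
  have d3 : ((m : ℕ) : ZMod N) ∉ ({((m + 1 : ℕ) : ZMod N)} : Finset (ZMod N)) := by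
    rw [mem_singleton]
    exact cast_ne (by omega) (by omega) (by omega)
  rw [card_insert_of_notMem d1, card_insert_of_notMem d2, card_insert_of_notMem d3,
    card_singleton]

lemma nX2_eq (hN : 4 ≤ N) (hm2 : 2 ≤ m) (hmN : m + 2 ≤ N) :
    nX N m ({(0 : ZMod N), 1} : Finset (ZMod N)) = 4 := by
  rw [nX, bdry_X2 hN hm2 hmN]
  have d1 : ((N - 1 : ℕ) : ZMod N) ∉
      ({((0 : ℕ) : ZMod N), ((1 : ℕ) : ZMod N), ((m : ℕ) : ZMod N)} : Finset (ZMod N)) := by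
    simp only [mem_insert, mem_singleton, not_or]
    exact ⟨cast_ne (by omega) (by omega) (by omega), cast_ne (by omega) (by omega) (by omega),
      cast_ne (by omega) (by omega) (by omega)⟩
  have d2 : ((0 : ℕ) : ZMod N) ∉
      ({((1 : ℕ) : ZMod N), ((m : ℕ) : ZMod N)} : Finset (ZMod N)) := by
    simp only [mem_insert, mem_singleton, not_or]
    exact ⟨cast_ne (by omega) (by omega) (by omega), cast_ne (by omega) (by omega) (by omega)⟩
  have d3 : ((1 : ℕ) : ZMod N) ∉ ({((m : ℕ) : ZMod N)} : Finset (ZMod N)) := by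
    rw [mem_singleton]
    exact cast_ne (by omega) (by omega) (by omega)
  rw [card_insert_of_notMem d1, card_insert_of_notMem d2, card_insert_of_notMem d3,
    card_singleton]

lemma sum_X1 (hN : 4 ≤ N) (hm2 : 2 ≤ m) (hmN : m + 2 ≤ N) :
    ∑ j ∈ pbdry N (({(m : ZMod N), (m : ZMod N) + 1} : Finset (ZMod N)) ∆ Mset N m),
      pext N m 0 (({(m : ZMod N), (m : ZMod N) + 1} : Finset (ZMod N)) ∆ {j, j + 1}) = 1 := by
  have hmN' : m < N := by omega
  have hterm : ∀ j : ZMod N,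
      pext N m 0 (({(m : ZMod N), (m : ZMod N) + 1} : Finset (ZMod N)) ∆ {j, j + 1}) =
        if j = (m : ZMod N) then 1 else 0 := by
    intro j
    have hiff : (({(m : ZMod N), (m : ZMod N) + 1} : Finset (ZMod N)) ∆ {j, j + 1} = ∅) ↔
        j = (m : ZMod N) := by
      rw [← Finset.bot_eq_empty, symmDiff_eq_bot, eq_comm, pair_succ_eq hN]
    rw [pext_zero, if_congr hiff rfl rfl]
  rw [Finset.sum_congr rfl (fun j _ => hterm j), Finset.sum_ite_eq']
  rw [if_pos]
  rw [mem_pbdry, mem_X1M hN hm2 hmN, mem_X1M hN hm2 hmN, val_add_one hN,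
    ZMod.val_cast_of_lt hmN']
  split_ifs <;> (try simp only [or_false, false_or, and_true, true_and, true_or, or_true, not_true, and_false, false_and, not_false_eq_true]) <;> omega

lemma sum_X2 (hN : 4 ≤ N) (hm2 : 2 ≤ m) (hmN : m + 2 ≤ N) :
    ∑ j ∈ pbdry N (({(0 : ZMod N), 1} : Finset (ZMod N)) ∆ Mset N m),
      pext N m 0 (({(0 : ZMod N), 1} : Finset (ZMod N)) ∆ {j, j + 1}) = 1 := by
  have hpair : ({(0 : ZMod N), 1} : Finset (ZMod N)) = {0, 0 + 1} := by rw [zero_add]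
  have hterm : ∀ j : ZMod N,
      pext N m 0 (({(0 : ZMod N), 1} : Finset (ZMod N)) ∆ {j, j + 1}) =
        if j = (0 : ZMod N) then 1 else 0 := by
    intro j
    have hiff : (({(0 : ZMod N), 1} : Finset (ZMod N)) ∆ {j, j + 1} = ∅) ↔
        j = (0 : ZMod N) := by
      rw [← Finset.bot_eq_empty, symmDiff_eq_bot, eq_comm, hpair, pair_succ_eq hN]
    rw [pext_zero, if_congr hiff rfl rfl]
  rw [Finset.sum_congr rfl (fun j _ => hterm j), Finset.sum_ite_eq']
  rw [if_pos]
  rw [mem_pbdry, mem_X2M hN hm2 hmN, mem_X2M hN hm2 hmN, val_add_one hN, ZMod.val_zero]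
  split_ifs <;> (try simp only [or_false, false_or, and_true, true_and, true_or, or_true, not_true, and_false, false_and, not_false_eq_true]) <;> omega

end Aux2


theorem dropF_zero (N : ℕ) [NeZero N] (m : ℕ) (ε : ℝ)
    (hN : 4 ≤ N) (hm : 2 ≤ m) (hmN : m + 2 ≤ N) :
    (∀ s : ZMod N, (dropF N m ε 0).1 s = 0) ∧
      (dropF N m ε 0).2 {(m : ZMod N), (m : ZMod N) + 1} = -ε / 2 ∧
      (dropF N m ε 0).2 {(0 : ZMod N), 1} = -ε / 2 ∧
      (∀ X : Finset (ZMod N),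
        X ≠ {(m : ZMod N), (m : ZMod N) + 1} → X ≠ {(0 : ZMod N), 1} →
          (dropF N m ε 0).2 X = 0) ∧
      pnorm N m (dropF N m ε 0) = 4 * |ε| := by
  have hmN' : m < N := by omega
  -- Part 1: first components vanish
  have hpart1 : ∀ s : ZMod N, (dropF N m ε 0).1 s = 0 := by
    intro s
    simp only [dropF, Prod.snd_zero]
    have hsum : ∑ j ∈ pbdry N (tr N (Mset N m) (-s)),
        pext N m 0 (Mset N m ∆ tr N (Mset N m) (-s) ∆ {j, j + 1}) = 0 := by
      apply Finset.sum_eq_zero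
      intro j _
      rw [pext_zero, if_neg]
      intro hE
      rw [← Finset.bot_eq_empty, symmDiff_eq_bot] at hE
      exact no_pair_translate hN hm hmN (-s) j hE
    rw [hsum, mul_zero]
  -- Part 2: value at X1
  have hpart2 : (dropF N m ε 0).2 {(m : ZMod N), (m : ZMod N) + 1} = -ε / 2 := by
    simp only [dropF, Prod.fst_zero, Prod.snd_zero]
    rw [if_pos ⟨card_X1M hN hm hmN, by rw [nX1_eq hN hm hmN]; omega⟩]
    rw [nX1_eq hN hm hmN, sum_X1 hN hm hmN]
    simp only [Pi.zero_apply, zero_mul, Finset.sum_const_zero, mul_zero, add_zero]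
    norm_num
    ring
  -- Part 3: value at X2
  have hpart3 : (dropF N m ε 0).2 {(0 : ZMod N), 1} = -ε / 2 := by
    simp only [dropF, Prod.fst_zero, Prod.snd_zero]
    rw [if_pos ⟨card_X2M hN hm hmN, by rw [nX2_eq hN hm hmN]; omega⟩]
    rw [nX2_eq hN hm hmN, sum_X2 hN hm hmN]
    simp only [Pi.zero_apply, zero_mul, Finset.sum_const_zero, mul_zero, add_zero]
    norm_num
    ring
  -- Part 4: all other components vanish
  have hpart4 : ∀ X : Finset (ZMod N),
      X ≠ {(m : ZMod N), (m : ZMod N) + 1} → X ≠ {(0 : ZMod N), 1} →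
        (dropF N m ε 0).2 X = 0 := by
    intro X h1 h2
    simp only [dropF, Prod.fst_zero, Prod.snd_zero]
    by_cases hc : (X ∆ Mset N m).card = m ∧ 2 < nX N m X
    · rw [if_pos hc]
      have hsum : ∑ j ∈ pbdry N (X ∆ Mset N m), pext N m 0 (X ∆ {j, j + 1}) = 0 := by
        apply Finset.sum_eq_zero
        intro j _
        rw [pext_zero, if_neg]
        intro hE
        rw [← Finset.bot_eq_empty, symmDiff_eq_bot] at hE
        have hcard' : (Mset N m ∆ ({j, j + 1} : Finset (ZMod N))).card = m := by
          rw [symmDiff_comm, ← hE]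
          exact hc.1
        rcases exactly_one hN hm hmN j hcard' with ⟨ha, hb⟩ | ⟨ha, hb⟩
        · exact h1 (by rw [hE, interval_top hN hm hmN ha hb])
        · exact h2 (by rw [hE, interval_bot hN hm hmN ha hb, zero_add])
      rw [hsum]
      simp
    · rw [if_neg hc]
  -- Part 5: the norm
  have hne12 : ({(m : ZMod N), (m : ZMod N) + 1} : Finset (ZMod N)) ≠ {(0 : ZMod N), 1} := by
    intro h
    have hm1 : (m : ZMod N) ∈ ({(0 : ZMod N), 1} : Finset (ZMod N)) := h ▸ Finset.mem_insert_self _ _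
    rw [mem_X2 hN, ZMod.val_cast_of_lt hmN'] at hm1
    omega
  have hpart5 : pnorm N m (dropF N m ε 0) = 4 * |ε| := by
    have hfst : ∑ s : ZMod N, |(dropF N m ε 0).1 s| = 0 :=
      Finset.sum_eq_zero fun s _ => by rw [hpart1 s, abs_zero]
    have hsub : ({({(m : ZMod N), (m : ZMod N) + 1} : Finset (ZMod N)), {(0 : ZMod N), 1}} :
        Finset (Finset (ZMod N))) ⊆ psector N m := by
      intro X hX
      rw [Finset.mem_insert, Finset.mem_singleton] at hX
      simp only [psector, Finset.mem_filter, Finset.mem_univ, true_and]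
      rcases hX with rfl | rfl
      · exact ⟨card_X1M hN hm hmN, by rw [nX1_eq hN hm hmN]; omega⟩
      · exact ⟨card_X2M hN hm hmN, by rw [nX2_eq hN hm hmN]; omega⟩
    have hvan : ∀ X ∈ psector N m,
        X ∉ ({({(m : ZMod N), (m : ZMod N) + 1} : Finset (ZMod N)), {(0 : ZMod N), 1}} :
          Finset (Finset (ZMod N))) →
        ((nX N m X : ℝ) - 2) * |(dropF N m ε 0).2 X| = 0 := by
      intro X _ hX
      rw [Finset.mem_insert, Finset.mem_singleton, not_or] at hX
      rw [hpart4 X hX.1 hX.2, abs_zero, mul_zero]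
    have hsnd : ∑ X ∈ psector N m, ((nX N m X : ℝ) - 2) * |(dropF N m ε 0).2 X|
        = 2 * |ε| / 2 + 2 * |ε| / 2 := by
      rw [← Finset.sum_subset hsub hvan, Finset.sum_pair hne12, hpart2, hpart3,
        nX1_eq hN hm hmN, nX2_eq hN hm hmN]
      rw [abs_div, abs_neg, abs_two]
      norm_num
      ring
    rw [pnorm, hfst, hsnd]
    ring
  exact ⟨hpart1, hpart2, hpart3, hpart4, hpart5⟩
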